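/- Let R be a ring. Then R is a CN ring if and only if the Dorroh extension D(Z, R) is a CN ring, where D(Z, R) is the ring on the set Z ⊕ R with componentwise addition and multiplication (n, r)(m, s) = (nm, n·s + m·r + rs), whose identity is (1, 0). -/

import Mathlib

/-- An element of a ring has a *CN-decomposition* if it is a sum of a central
element and a nilpotent element. -/
def HasCNDecomp {R : Type*} [Ring R] (a : R) : Prop :=
  ∃ c n : R, c ∈ Set.center R ∧ IsNilpotent n ∧ a = c + n

/-- A ring is a *CN ring* if every element has a CN-decomposition. -/
def IsCNRing (R : Type*) [Ring R] : Prop := ∀ a : R, HasCNDecomp a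

lemma unitization_inr_pow {R : Type*} [Ring R] (r : R) (k : ℕ) :
    (Unitization.inr r : Unitization ℤ R) ^ (k + 1) = Unitization.inr (r ^ (k + 1)) := by
  induction k with
  | zero => simp
  | succ k ih => rw [pow_succ, ih, ← Unitization.inr_mul, ← pow_succ]

lemma unitization_center_iff {R : Type*} [Ring R] (x : Unitization ℤ R) :
    x ∈ Set.center (Unitization ℤ R) ↔ x.snd ∈ Set.center R := by
  rw [Semigroup.mem_center_iff, Semigroup.mem_center_iff]
  constructor
  · intro h s
    have := congrArg (fun x : Unitization ℤ R => x.snd) (h (Unitization.inr s))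
    simpa using this
  · intro h y
    ext
    · simp [mul_comm]
    · simp only [Unitization.snd_mul, h y.snd]
      abel
  
theorem isCNRing_iff_dorroh {R : Type*} [Ring R] :
    IsCNRing R ↔ IsCNRing (Unitization ℤ R) := by
  constructor
  · intro hR a
    obtain ⟨c, n, hc, ⟨k, hk⟩, hsum⟩ := hR a.snd
    refine ⟨Unitization.inl a.fst + Unitization.inr c, Unitization.inr n, ?_, ?_, ?_⟩
    · rw [Semigroup.mem_center_iff]
      intro y
      have hc' : (Unitization.inl a.fst + Unitization.inr c : Unitization ℤ R) ∈
          Set.center (Unitization ℤ R) := by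
        rw [unitization_center_iff]
        simpa using hc
      exact (Semigroup.mem_center_iff.mp hc') y
    · refine ⟨k + 1, ?_⟩
      rw [unitization_inr_pow]
      have : n ^ (k + 1) = 0 := by rw [pow_succ', hk, mul_zero]
      simp [this]
    · ext
      · simp
      · simp [hsum]
  · intro hD a
    obtain ⟨c, n, hc, ⟨k, hk⟩, hsum⟩ := hD (Unitization.inr a)
    refine ⟨c.snd, n.snd, (unitization_center_iff c).mp hc, ?_, ?_⟩
    · have hfst : IsNilpotent n.fst := by
        refine ⟨k, ?_⟩
        have h1 := congrArg (Unitization.fstHom ℤ R) hk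
        rw [map_pow, map_zero] at h1
        simpa using h1
      have hn0 : n.fst = 0 := hfst.eq_zero
      have hn : n = Unitization.inr n.snd := by ext <;> simp [hn0]
      refine ⟨k + 1, ?_⟩
      have hk1 : n ^ (k + 1) = 0 := by rw [pow_succ, hk, zero_mul]
      rw [hn, unitization_inr_pow] at hk1
      have := congrArg (fun x : Unitization ℤ R => x.snd) hk1
      simpa using this
    · have := congrArg (fun x : Unitization ℤ R => x.snd) hsum
      simpa using this
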